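/- (Theorem 3, probabilistic form.) Consider the linear model Y = Xβ* + ε with Y ∈ ℝ^n, X ∈ ℝ^{n×p}, |supp(β*)| ≤ S, and ε independent mean-zero sub-Gaussian with variance proxy σ². Assume ‖X‖₁ ≤ C √n for some constant C > 0 and that X satisfies the restricted eigenvalue condition with constant γ > 0 over the cone C(β*). Let α > 2 and λ₀ = σ √(α log p / n). Then with probability at least 1 − 2 n p^{−α/2}, every vector β̂ that is feasible for the constrained ℓ∞ problem with parameter λ₀ and satisfies ‖β̂‖₁ ≤ ‖β*‖₁ obeys (1/√n) ‖X(β̂ − β*)‖₂ ≤ (4Cσ/√γ) √(α S log p / n). -/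

import Mathlib

open MeasureTheory ProbabilityTheory Finset

/-- The maximum absolute entry of a vector in `ℝ^n`. -/
noncomputable def linftyNorm {n : ℕ} (v : Fin n → ℝ) : ℝ := ⨆ i, |v i|

/-- The maximum absolute column sum of a matrix `X ∈ ℝ^{n×p}`. -/
noncomputable def colSumNorm {n p : ℕ} (X : Matrix (Fin n) (Fin p) ℝ) : ℝ :=
  ⨆ j, ∑ i, |X i j|

/-- Membership in the cone `C(β*)`: `‖ν_{S₀ᶜ}‖₁ ≤ ‖ν_{S₀}‖₁`, `S₀ = supp(β*)`. -/
def inCone {p : ℕ} (βstar ν : Fin p → ℝ) : Prop :=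
  ∑ j ∈ Finset.univ.filter (fun j => βstar j = 0), |ν j|
    ≤ ∑ j ∈ Finset.univ.filter (fun j => βstar j ≠ 0), |ν j|

/-- Feasibility for the constrained ℓ∞ problem: `(1/√n) ‖Y − Xβ‖_∞ ≤ λ₀`. -/
noncomputable def feasible {n p : ℕ} (Y : Fin n → ℝ) (X : Matrix (Fin n) (Fin p) ℝ)
    (lam₀ : ℝ) (β : Fin p → ℝ) : Prop :=
  (1 / Real.sqrt n) * linftyNorm (fun i => Y i - X.mulVec β i) ≤ lam₀

lemma det_core {n p : ℕ} (hn : 1 ≤ n) (hp : 2 ≤ p)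
    (X : Matrix (Fin n) (Fin p) ℝ) (βstar : Fin p → ℝ)
    (S : ℕ)
    (hsparse : (Finset.univ.filter (fun j => βstar j ≠ 0)).card ≤ S)
    (C : ℝ) (hC : 0 < C)
    (hcolsum : colSumNorm X ≤ C * Real.sqrt n)
    (γ : ℝ) (hγ : 0 < γ)
    (hRE : ∀ ν : Fin p → ℝ, inCone βstar ν →
      γ * ∑ j, (ν j) ^ 2 ≤ (1 / (n : ℝ)) * ∑ i, (X.mulVec ν i) ^ 2)
    (lam₀ : ℝ) (hlam₀ : 0 ≤ lam₀)
    (e : Fin n → ℝ) (he : ∀ i, |e i| ≤ Real.sqrt n * lam₀)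
    (Yv : Fin n → ℝ) (hYv : ∀ i, Yv i = X.mulVec βstar i + e i)
    (βhat : Fin p → ℝ) (hfeas : feasible Yv X lam₀ βhat)
    (hl1 : (∑ j, |βhat j|) ≤ ∑ j, |βstar j|) :
    (1 / Real.sqrt n) * Real.sqrt (∑ i, (X.mulVec (fun j => βhat j - βstar j) i) ^ 2)
      ≤ 4 * C * Real.sqrt S / Real.sqrt γ * lam₀ := by
  haveI : Nonempty (Fin n) := Fin.pos_iff_nonempty.mp (by omega)
  haveI : Nonempty (Fin p) := Fin.pos_iff_nonempty.mp (by omega)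
  have hn0 : (0:ℝ) < n := by exact_mod_cast Nat.lt_of_lt_of_le Nat.zero_lt_one hn
  have hsn : (0:ℝ) < Real.sqrt n := Real.sqrt_pos.mpr hn0
  set ν : Fin p → ℝ := fun j => βhat j - βstar j with hν
  set r : Fin n → ℝ := fun i => Yv i - X.mulVec βhat i with hr
  -- feasibility pointwise
  have hrb : ∀ i, |r i| ≤ Real.sqrt n * lam₀ := by
    intro i
    have hsup : linftyNorm (fun i => Yv i - X.mulVec βhat i) ≤ Real.sqrt n * lam₀ := by
      have := hfeas
      unfold feasible at this
      rw [one_div_mul_eq_div, div_le_iff₀ hsn] at this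
      linarith [this]
    refine le_trans ?_ hsup
    unfold linftyNorm
    exact le_ciSup (f := fun i => |Yv i - X.mulVec βhat i|)
      (Set.Finite.bddAbove (Set.finite_range _)) i
  -- mulVec of ν
  have hmv : ∀ i, X.mulVec ν i = e i - r i := by
    intro i
    simp only [hr, hν, hYv i, Matrix.mulVec, dotProduct, mul_sub,
      Finset.sum_sub_distrib]
    ring
  have hXb : ∀ i, |X.mulVec ν i| ≤ 2 * Real.sqrt n * lam₀ := by
    intro i
    rw [hmv i]
    calc |e i - r i| ≤ |e i| + |r i| := abs_sub _ _
      _ ≤ Real.sqrt n * lam₀ + Real.sqrt n * lam₀ := add_le_add (he i) (hrb i)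
      _ = 2 * Real.sqrt n * lam₀ := by ring
  -- column sums
  have hcol : ∀ j, ∑ i, |X i j| ≤ C * Real.sqrt n := by
    intro j
    refine le_trans ?_ hcolsum
    unfold colSumNorm
    exact le_ciSup (f := fun j => ∑ i, |X i j|)
      (Set.Finite.bddAbove (Set.finite_range _)) j
  -- cone membership
  have hcone : inCone βstar ν := by
    unfold inCone
    have hsplit : ∀ f : Fin p → ℝ,
        (∑ j ∈ Finset.univ.filter (fun j => βstar j = 0), f j)
          + ∑ j ∈ Finset.univ.filter (fun j => βstar j ≠ 0), f j = ∑ j, f j := by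
      intro f
      simpa using Finset.sum_filter_add_sum_filter_not Finset.univ (fun j => βstar j = 0) f
    have h0 : ∀ j ∈ Finset.univ.filter (fun j => βstar j = 0), |βhat j| = |ν j| := by
      intro j hj
      simp only [Finset.mem_filter] at hj
      simp [hν, hj.2]
    have h0' : ∀ j ∈ Finset.univ.filter (fun j => βstar j = 0), |βstar j| = 0 := by
      intro j hj
      simp only [Finset.mem_filter] at hj
      simp [hj.2]
    have h1 := hl1
    rw [← hsplit (fun j => |βhat j|), ← hsplit (fun j => |βstar j|),
      Finset.sum_congr rfl h0, Finset.sum_congr rfl h0', Finset.sum_const_zero, zero_add] at h1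
    have h2 : ∑ j ∈ Finset.univ.filter (fun j => βstar j ≠ 0), (|βstar j| - |βhat j|)
        ≤ ∑ j ∈ Finset.univ.filter (fun j => βstar j ≠ 0), |ν j| := by
      refine Finset.sum_le_sum fun j _ => ?_
      have : |βstar j| - |βhat j| ≤ |βstar j - βhat j| := abs_sub_abs_le_abs_sub _ _
      calc |βstar j| - |βhat j| ≤ |βstar j - βhat j| := this
        _ = |ν j| := by rw [hν]; rw [abs_sub_comm]
    rw [Finset.sum_sub_distrib] at h2
    linarith
  -- ℓ2-ℓ1 on support
  have hl2 : (∑ j, |ν j|) ≤ 2 * Real.sqrt S * Real.sqrt (∑ j, (ν j) ^ 2) := by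
    have hsplit := Finset.sum_filter_add_sum_filter_not Finset.univ (fun j => βstar j = 0)
      (fun j => |ν j|)
    set A := Finset.univ.filter (fun j => βstar j ≠ 0) with hA
    have hA' : Finset.univ.filter (fun j => ¬ βstar j = 0) = A := rfl
    have hCS : (∑ j ∈ A, |ν j|) ≤ Real.sqrt S * Real.sqrt (∑ j, (ν j) ^ 2) := by
      have h1 : (∑ j ∈ A, |ν j|) ^ 2 ≤ (A.card : ℝ) * ∑ j ∈ A, |ν j| ^ 2 := by
        exact_mod_cast sq_sum_le_card_mul_sum_sq (s := A) (f := fun j => |ν j|)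
      have h2 : (A.card : ℝ) * ∑ j ∈ A, |ν j| ^ 2 ≤ (S : ℝ) * ∑ j, (ν j) ^ 2 := by
        apply mul_le_mul (by exact_mod_cast hsparse)
        · refine le_trans (le_of_eq ?_) (Finset.sum_le_sum_of_subset_of_nonneg
            (Finset.subset_univ A) (fun j _ _ => sq_nonneg _))
          exact Finset.sum_congr rfl fun j _ => sq_abs _
        · positivity
        · positivity
      have h3 : (∑ j ∈ A, |ν j|) ≤ Real.sqrt ((S : ℝ) * ∑ j, (ν j) ^ 2) := by
        rw [← Real.sqrt_sq (Finset.sum_nonneg fun j _ => abs_nonneg _)]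
        exact Real.sqrt_le_sqrt (le_trans h1 h2)
      rwa [Real.sqrt_mul (by positivity)] at h3
    have hconeA : ∑ j ∈ Finset.univ.filter (fun j => βstar j = 0), |ν j| ≤ ∑ j ∈ A, |ν j| :=
      hcone
    calc ∑ j, |ν j| = (∑ j ∈ Finset.univ.filter (fun j => βstar j = 0), |ν j|)
          + ∑ j ∈ A, |ν j| := by rw [← hsplit]
      _ ≤ 2 * ∑ j ∈ A, |ν j| := by linarith
      _ ≤ 2 * (Real.sqrt S * Real.sqrt (∑ j, (ν j) ^ 2)) := by linarith
      _ = 2 * Real.sqrt S * Real.sqrt (∑ j, (ν j) ^ 2) := by ring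
  -- quadratic bound
  set Q2 : ℝ := ∑ i, (X.mulVec ν i) ^ 2 with hQ2def
  have hQ2nn : 0 ≤ Q2 := Finset.sum_nonneg fun i _ => sq_nonneg _
  set M : ℝ := 2 * Real.sqrt n * lam₀ with hM
  have hMnn : 0 ≤ M := by positivity
  have hquad : Q2 ≤ (∑ j, |ν j|) * (C * Real.sqrt n * M) := by
    have step1 : Q2 = ∑ j, ν j * (∑ i, X i j * X.mulVec ν i) := by
      rw [hQ2def]
      have hthis : ∀ i, (X.mulVec ν i) ^ 2 = ∑ j, X i j * ν j * X.mulVec ν i := by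
        intro i
        have : X.mulVec ν i = ∑ j, X i j * ν j := by
          simp [Matrix.mulVec, dotProduct]
        rw [sq]
        nth_rewrite 1 [this]
        rw [Finset.sum_mul]
      rw [Finset.sum_congr rfl fun i _ => hthis i, Finset.sum_comm]
      refine Finset.sum_congr rfl fun j _ => ?_
      rw [Finset.mul_sum]
      exact Finset.sum_congr rfl fun i _ => by ring
    rw [step1, Finset.sum_mul]
    refine Finset.sum_le_sum fun j _ => ?_
    have habs : |∑ i, X i j * X.mulVec ν i| ≤ C * Real.sqrt n * M := by
      calc |∑ i, X i j * X.mulVec ν i| ≤ ∑ i, |X i j * X.mulVec ν i| :=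
            Finset.abs_sum_le_sum_abs _ _
        _ = ∑ i, |X i j| * |X.mulVec ν i| := by
            exact Finset.sum_congr rfl fun i _ => abs_mul _ _
        _ ≤ ∑ i, |X i j| * M := Finset.sum_le_sum fun i _ =>
            mul_le_mul_of_nonneg_left (hXb i) (abs_nonneg _)
        _ = (∑ i, |X i j|) * M := by rw [← Finset.sum_mul]
        _ ≤ C * Real.sqrt n * M := mul_le_mul_of_nonneg_right (hcol j) hMnn
    calc ν j * (∑ i, X i j * X.mulVec ν i) ≤ |ν j * (∑ i, X i j * X.mulVec ν i)| :=
          le_abs_self _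
      _ = |ν j| * |∑ i, X i j * X.mulVec ν i| := abs_mul _ _
      _ ≤ |ν j| * (C * Real.sqrt n * M) :=
          mul_le_mul_of_nonneg_left habs (abs_nonneg _)
  -- RE condition
  have hre := hRE ν hcone
  have hnu2 : Real.sqrt (∑ j, (ν j) ^ 2) ≤ Real.sqrt Q2 / Real.sqrt (n * γ) := by
    have h1 : ∑ j, (ν j) ^ 2 ≤ Q2 / (n * γ) := by
      rw [le_div_iff₀ (by positivity)]
      calc (∑ j, (ν j) ^ 2) * (n * γ) = (γ * ∑ j, (ν j) ^ 2) * n := by ring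
        _ ≤ ((1 / (n : ℝ)) * Q2) * n := by
            apply mul_le_mul_of_nonneg_right hre (le_of_lt hn0)
        _ = Q2 := by field_simp
    calc Real.sqrt (∑ j, (ν j) ^ 2) ≤ Real.sqrt (Q2 / (n * γ)) := Real.sqrt_le_sqrt h1
      _ = Real.sqrt Q2 / Real.sqrt (n * γ) := Real.sqrt_div hQ2nn _
  -- combine
  set Q : ℝ := Real.sqrt Q2 with hQdef
  have hQnn : 0 ≤ Q := Real.sqrt_nonneg _
  have hQsq : Q * Q = Q2 := Real.mul_self_sqrt hQ2nn
  set K : ℝ := 2 * Real.sqrt S * C * Real.sqrt n * M / Real.sqrt (n * γ) with hK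
  have hKnn : 0 ≤ K := by
    apply div_nonneg _ (Real.sqrt_nonneg _)
    positivity
  have hQK : Q * Q ≤ K * Q := by
    rw [hQsq]
    calc Q2 ≤ (∑ j, |ν j|) * (C * Real.sqrt n * M) := hquad
      _ ≤ (2 * Real.sqrt S * (Q / Real.sqrt (n * γ))) * (C * Real.sqrt n * M) := by
          apply mul_le_mul_of_nonneg_right _ (by positivity)
          calc (∑ j, |ν j|) ≤ 2 * Real.sqrt S * Real.sqrt (∑ j, (ν j) ^ 2) := hl2
            _ ≤ 2 * Real.sqrt S * (Q / Real.sqrt (n * γ)) := by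
                apply mul_le_mul_of_nonneg_left hnu2 (by positivity)
      _ = K * Q := by rw [hK]; ring
  have hQleK : Q ≤ K := by
    rcases eq_or_lt_of_le hQnn with h | h
    · rw [← h]; exact hKnn
    · exact le_of_mul_le_mul_right hQK h
  have hgoal : (1 / Real.sqrt n) * Q ≤ (1 / Real.sqrt n) * K :=
    mul_le_mul_of_nonneg_left hQleK (by positivity)
  have hKeq : (1 / Real.sqrt n) * K = 4 * C * Real.sqrt S / Real.sqrt γ * lam₀ := by
    rw [hK, hM, Real.sqrt_mul hn0.le]
    have hsγ : Real.sqrt γ ≠ 0 := ne_of_gt (Real.sqrt_pos.mpr hγ)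
    field_simp
    ring
  rw [hKeq] at hgoal
  exact hgoal

/-- Theorem 3, probabilistic form: with probability at least
`1 − 2 n p^{−α/2}`, every feasible `β̂` with `‖β̂‖₁ ≤ ‖β*‖₁` satisfies
`(1/√n)‖X(β̂ − β*)‖₂ ≤ (4Cσ/√γ) √(α S log p / n)`. -/
theorem prediction_error_prob
    {Ω : Type*} [MeasureSpace Ω] [IsProbabilityMeasure (ℙ : Measure Ω)]
    (n p : ℕ) (hn : 1 ≤ n) (hp : 2 ≤ p) (σ : ℝ) (hσ : 0 < σ)
    (X : Matrix (Fin n) (Fin p) ℝ) (βstar : Fin p → ℝ)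
    (S : ℕ) (hS : 0 < S)
    (hsparse : (Finset.univ.filter (fun j => βstar j ≠ 0)).card ≤ S)
    (C : ℝ) (hC : 0 < C)
    (hcolsum : colSumNorm X ≤ C * Real.sqrt n)
    (γ : ℝ) (hγ : 0 < γ)
    (hRE : ∀ ν : Fin p → ℝ, inCone βstar ν →
      γ * ∑ j, (ν j) ^ 2 ≤ (1 / (n : ℝ)) * ∑ i, (X.mulVec ν i) ^ 2)
    (ε : Fin n → Ω → ℝ)
    (hmeas : ∀ i, Measurable (ε i))
    (hmean : ∀ i, ∫ ω, ε i ω = 0)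
    (hindep : iIndepFun ε ℙ)
    (hsub : ∀ i, ∀ t : ℝ, 0 ≤ t →
      ℙ {ω | t < |ε i ω|} ≤ ENNReal.ofReal (2 * Real.exp (-(t ^ 2) / (2 * σ ^ 2))))
    (Y : Ω → Fin n → ℝ)
    (hY : ∀ ω, ∀ i, Y ω i = X.mulVec βstar i + ε i ω)
    (α : ℝ) (hα : 2 < α)
    (lam₀ : ℝ) (hlam₀ : lam₀ = σ * Real.sqrt (α * Real.log p / n)) :
    ENNReal.ofReal (1 - 2 * n * (p : ℝ) ^ (-(α / 2)))
      ≤ ℙ {ω | ∀ βhat : Fin p → ℝ,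
            feasible (Y ω) X lam₀ βhat → (∑ j, |βhat j|) ≤ (∑ j, |βstar j|) →
            (1 / Real.sqrt n)
                * Real.sqrt (∑ i, (X.mulVec (fun j => βhat j - βstar j) i) ^ 2)
              ≤ (4 * C * σ / Real.sqrt γ) * Real.sqrt (α * S * Real.log p / n)} := by
  have hn0 : (0:ℝ) < n := by exact_mod_cast Nat.lt_of_lt_of_le Nat.zero_lt_one hn
  have hp1 : (1:ℝ) ≤ p := by
    have : (2:ℝ) ≤ p := by exact_mod_cast hp
    linarith
  have hp0 : (0:ℝ) < p := by linarith
  have hlog : 0 ≤ Real.log p := Real.log_nonneg hp1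
  have hα0 : (0:ℝ) < α := by linarith
  have harg : 0 ≤ α * Real.log p / n := div_nonneg (mul_nonneg hα0.le hlog) hn0.le
  have hlam0nn : 0 ≤ lam₀ := by rw [hlam₀]; positivity
  set t : ℝ := Real.sqrt n * lam₀ with ht_def
  have htnn : 0 ≤ t := mul_nonneg (Real.sqrt_nonneg _) hlam0nn
  have hlamsq : lam₀ ^ 2 = σ ^ 2 * (α * Real.log p / n) := by
    rw [hlam₀, mul_pow, Real.sq_sqrt harg]
  have ht2 : t ^ 2 = σ ^ 2 * (α * Real.log p) := by
    rw [ht_def, mul_pow, Real.sq_sqrt hn0.le, hlamsq]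
    field_simp
  have hexp : 2 * Real.exp (-(t ^ 2) / (2 * σ ^ 2)) = 2 * (p:ℝ) ^ (-(α / 2)) := by
    have h1 : -(t ^ 2) / (2 * σ ^ 2) = Real.log p * (-(α / 2)) := by
      rw [ht2]
      field_simp
    rw [h1, ← Real.rpow_def_of_pos hp0]
  -- the good event
  set E : Set Ω := ⋂ i, {ω | |ε i ω| ≤ t} with hE_def
  have hmeasE : MeasurableSet E :=
    MeasurableSet.iInter fun i => measurableSet_le (hmeas i).abs measurable_const
  -- E is contained in the target event
  have hsubset : E ⊆ {ω | ∀ βhat : Fin p → ℝ,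
      feasible (Y ω) X lam₀ βhat → (∑ j, |βhat j|) ≤ (∑ j, |βstar j|) →
      (1 / Real.sqrt n)
          * Real.sqrt (∑ i, (X.mulVec (fun j => βhat j - βstar j) i) ^ 2)
        ≤ (4 * C * σ / Real.sqrt γ) * Real.sqrt (α * S * Real.log p / n)} := by
    intro ω hω
    have hω' : ∀ i, |ε i ω| ≤ t := fun i => Set.mem_iInter.mp hω i
    intro βhat hfe hl1
    have hbd := det_core hn hp X βstar S hsparse C hC hcolsum γ hγ hRE lam₀ hlam0nn
      (fun i => ε i ω) (fun i => hω' i) (Y ω) (fun i => hY ω i) βhat hfe hl1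
    have heq : 4 * C * Real.sqrt S / Real.sqrt γ * lam₀
        = (4 * C * σ / Real.sqrt γ) * Real.sqrt (α * S * Real.log p / n) := by
      rw [hlam₀, show (α * (S:ℝ) * Real.log p / n) = (S:ℝ) * (α * Real.log p / n) by ring,
        Real.sqrt_mul (Nat.cast_nonneg S)]
      ring
    rw [heq] at hbd
    exact hbd
  -- probability of the complement
  have hunion : ℙ Eᶜ ≤ ENNReal.ofReal (2 * n * (p:ℝ) ^ (-(α / 2))) := by
    have hEc : Eᶜ = ⋃ i, {ω | t < |ε i ω|} := by
      rw [hE_def, Set.compl_iInter]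
      refine Set.iUnion_congr fun i => ?_
      ext ω
      simp [not_le]
    rw [hEc]
    calc ℙ (⋃ i, {ω | t < |ε i ω|}) ≤ ∑ i, ℙ {ω | t < |ε i ω|} :=
          measure_iUnion_fintype_le _ _
      _ ≤ ∑ _i : Fin n, ENNReal.ofReal (2 * Real.exp (-(t ^ 2) / (2 * σ ^ 2))) :=
          Finset.sum_le_sum fun i _ => hsub i t htnn
      _ = (n : ENNReal) * ENNReal.ofReal (2 * (p:ℝ) ^ (-(α / 2))) := by
          rw [Finset.sum_const, Finset.card_univ, Fintype.card_fin, nsmul_eq_mul, hexp]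
      _ = ENNReal.ofReal (2 * n * (p:ℝ) ^ (-(α / 2))) := by
          rw [← ENNReal.ofReal_natCast n, ← ENNReal.ofReal_mul (Nat.cast_nonneg n)]
          congr 1
          ring
  calc ENNReal.ofReal (1 - 2 * n * (p:ℝ) ^ (-(α / 2)))
      = 1 - ENNReal.ofReal (2 * n * (p:ℝ) ^ (-(α / 2))) := by
        rw [ENNReal.ofReal_sub _ (by positivity), ENNReal.ofReal_one]
    _ ≤ 1 - ℙ Eᶜ := tsub_le_tsub_left hunion 1
    _ = ℙ E := by
        rw [prob_compl_eq_one_sub hmeasE,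
          ENNReal.sub_sub_cancel ENNReal.one_ne_top prob_le_one]
    _ ≤ _ := measure_mono hsubset
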